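/- If a pure ordered complex Ψ = (E, Δ) satisfies the quasi-exchange axiom, then the lexicographic order on its facets is a shelling order: for every pair of facets B₁ <_lex B₂ there is a facet B₃ <_lex B₂ and an element e ∈ B₂ such that B₁ ∩ B₂ ⊆ B₃ ∩ B₂ = B₂ \ {e}. -/

import Mathlib

variable {α : Type*} [LinearOrder α] [DecidableEq α] [Fintype α]

/-- A (abstract) simplicial complex: a downward closed family of finite sets. -/
def IsComplex (Δ : Finset α → Prop) : Prop :=
  ∀ ⦃s t : Finset α⦄, Δ t → s ⊆ t → Δ s

/-- A simplicial complex with all faces contained in the ground set `E`. -/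
def IsComplexOn (E : Finset α) (Δ : Finset α → Prop) : Prop :=
  (∀ ⦃s⦄, Δ s → s ⊆ E) ∧ IsComplex Δ

/-- A facet (basis): a maximal face. -/
def IsFacet (Δ : Finset α → Prop) (B : Finset α) : Prop :=
  Δ B ∧ ∀ ⦃C⦄, Δ C → B ⊆ C → B = C

/-- A circuit with respect to the ground set `E`: a minimal non-face contained in `E`. -/
def IsCircuitOn (E : Finset α) (Δ : Finset α → Prop) (C : Finset α) : Prop :=
  C ⊆ E ∧ ¬ Δ C ∧ ∀ ⦃D⦄, D ⊂ C → Δ D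

/-- A circuit: a minimal non-face. -/
def IsCircuit (Δ : Finset α → Prop) (C : Finset α) : Prop :=
  ¬ Δ C ∧ ∀ ⦃D⦄, D ⊂ C → Δ D

/-- Purity: all facets have the same cardinality. -/
def IsPure (Δ : Finset α → Prop) : Prop :=
  ∀ ⦃B B'⦄, IsFacet Δ B → IsFacet Δ B' → B.card = B'.card

/-- Lexicographic order on finite sets, comparing sorted element lists:
`B <lex B'` iff the minimum of the symmetric difference lies in `B`. -/
def lexLt (B B' : Finset α) : Prop :=
  ∃ a ∈ B \ B', ∀ b ∈ symmDiff B B', a ≤ b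

def lexLe (B B' : Finset α) : Prop := B = B' ∨ lexLt B B'

/-- `B₀` is the lexicographically smallest facet of `Δ`. -/
def IsLexMinFacet (Δ : Finset α → Prop) (B₀ : Finset α) : Prop :=
  IsFacet Δ B₀ ∧ ∀ ⦃B⦄, IsFacet Δ B → lexLe B₀ B

/-- Gale (componentwise) order: the `i`-th smallest element of `B` is at most
the `i`-th smallest element of `B'`, for all `i` (in particular equal cardinalities). -/
def galeLe (B B' : Finset α) : Prop :=
  List.Forall₂ (· ≤ ·) (Finset.sort B (· ≤ ·)) (Finset.sort B' (· ≤ ·))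

/-- Quasi-exchange axiom (without the purity requirement). -/
def QE (Δ : Finset α → Prop) : Prop :=
  ∀ ⦃B₁ B₂⦄, IsFacet Δ B₁ → IsFacet Δ B₂ →
    ∀ b₁ ∈ B₁ \ B₂, (∀ b ∈ B₂ \ B₁, b < b₁) →
      ∃ b₂ ∈ B₂ \ B₁, IsFacet Δ (insert b₂ (B₁.erase b₁))

/-- Quasi-circuit axiom (with circuits taken relative to the ground set `E`). -/
def QCon (E : Finset α) (Δ : Finset α → Prop) : Prop :=
  ∀ ⦃C₁ C₂⦄, IsCircuitOn E Δ C₁ → IsCircuitOn E Δ C₂ → C₁ ≠ C₂ →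
    ∀ c ∈ C₁ ∩ C₂, (∃ m ∈ symmDiff C₁ C₂, c < m) →
      ∃ C₃, IsCircuitOn E Δ C₃ ∧ C₃ ⊆ (C₁ ∪ C₂).erase c

/-- Quasi-circuit axiom (circuits are arbitrary minimal non-faces). -/
def QC (Δ : Finset α → Prop) : Prop :=
  ∀ ⦃C₁ C₂⦄, IsCircuit Δ C₁ → IsCircuit Δ C₂ → C₁ ≠ C₂ →
    ∀ c ∈ C₁ ∩ C₂, (∃ m ∈ symmDiff C₁ C₂, c < m) →
      ∃ C₃, IsCircuit Δ C₃ ∧ C₃ ⊆ (C₁ ∪ C₂).erase c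

/-- `b` is an internally passive element of the facet `B`. -/
def InternallyPassive (Δ : Finset α → Prop) (B : Finset α) (b : α) : Prop :=
  b ∈ B ∧ ∃ b', b' < b ∧ b' ∉ B ∧ IsFacet Δ (insert b' (B.erase b))

/-- Contraction of a face `I`. -/
def contract (Δ : Finset α → Prop) (I : Finset α) : Finset α → Prop :=
  fun J => Disjoint J I ∧ Δ (J ∪ I)

/-- Quasi-independence axiom: `Δ` is pure and for faces `I₁, I₂` with `|I₁| > |I₂|`,
if `I₁ \ I ⊆ B_{I,0}` for some `I ⊆ I₁ ∩ I₂`, then some `e ∈ I₁ \ I₂` extends `I₂`. -/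
def QI (Δ : Finset α → Prop) : Prop :=
  IsPure Δ ∧ ∀ ⦃I₁ I₂ : Finset α⦄, Δ I₁ → Δ I₂ → I₂.card < I₁.card →
    (∃ I, I ⊆ I₁ ∩ I₂ ∧ ∃ B, IsLexMinFacet (contract Δ I) B ∧ I₁ \ I ⊆ B) →
    ∃ e ∈ I₁ \ I₂, Δ (insert e I₂)

/-- The First Basis Property. -/
inductive FBP : (Finset α → Prop) → Prop
  | rank1 (Δ : Finset α → Prop) (h : ∀ s, Δ s → s.card ≤ 1) : FBP Δ
  | unique (Δ : Finset α → Prop) (B : Finset α) (hB : IsFacet Δ B)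
      (hu : ∀ B', IsFacet Δ B' → B' = B) : FBP Δ
  | step (Δ : Finset α → Prop) (B₀ : Finset α) (h₀ : IsLexMinFacet Δ B₀)
      (h1 : ∀ v, Δ {v} → v ∉ B₀ → FBP (contract Δ {v}))
      (h2 : ∀ v, Δ {v} → v ∉ B₀ →
        ∃ Bv, IsLexMinFacet (contract Δ {v}) Bv ∧ Bv ⊆ B₀) :
      FBP Δ

/-- in a pure complex satisfying the quasi-exchange axiom, the
lexicographic order on the facets is a shelling order. -/
theorem stmt5 (E : Finset α) (Δ : Finset α → Prop) (hΔ : IsComplexOn E Δ)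
    (hpure : IsPure Δ) (hQE : QE Δ) :
    ∀ B₁ B₂, IsFacet Δ B₁ → IsFacet Δ B₂ → lexLt B₁ B₂ →
      ∃ B₃, IsFacet Δ B₃ ∧ lexLt B₃ B₂ ∧
        ∃ e ∈ B₂, B₁ ∩ B₂ ⊆ B₃ ∩ B₂ ∧ B₃ ∩ B₂ = B₂.erase e := by
  intro B₁ B₂ hB₁ hB₂ hlt
  suffices H : ∀ n (B₁ : Finset α), (B₁ \ B₂).card ≤ n → IsFacet Δ B₁ → lexLt B₁ B₂ →
      ∃ B₃, IsFacet Δ B₃ ∧ lexLt B₃ B₂ ∧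
        ∃ e ∈ B₂, B₁ ∩ B₂ ⊆ B₃ ∩ B₂ ∧ B₃ ∩ B₂ = B₂.erase e by
    exact H _ B₁ le_rfl hB₁ hlt
  intro n
  induction n with
  | zero =>
    intro B₁ hcard hB₁ hlt
    have hsub : B₁ ⊆ B₂ := by
      intro x hx
      by_contra hxB
      have : x ∈ B₁ \ B₂ := Finset.mem_sdiff.mpr ⟨hx, hxB⟩
      have := Finset.card_pos.mpr ⟨x, this⟩
      omega
    have heq : B₁ = B₂ := hB₁.2 hB₂.1 hsub
    obtain ⟨a, ha, -⟩ := hlt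
    rw [heq] at ha
    simp at ha
  | succ n ih =>
    intro B₁ hcard hB₁ hlt
    obtain ⟨m, hm, hmin⟩ := hlt
    have hmS : m ∈ symmDiff B₁ B₂ := by
      rw [Finset.mem_symmDiff]
      exact Or.inl (Finset.mem_sdiff.mp hm)
    have hne : (symmDiff B₁ B₂).Nonempty := ⟨m, hmS⟩
    set M := (symmDiff B₁ B₂).max' hne with hMdef
    have hMS : M ∈ symmDiff B₁ B₂ := Finset.max'_mem _ hne
    have hMmax : ∀ b ∈ symmDiff B₁ B₂, b ≤ M := fun b hb => Finset.le_max' _ b hb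
    rw [Finset.mem_symmDiff] at hMS
    rcases hMS with ⟨hM1, hM2⟩ | ⟨hM2, hM1⟩
    · -- M ∈ B₁ \ B₂ : exchange down and recurse
      have hMmem : M ∈ B₁ \ B₂ := Finset.mem_sdiff.mpr ⟨hM1, hM2⟩
      have hbig : ∀ b ∈ B₂ \ B₁, b < M := by
        intro b hb
        rcases Finset.mem_sdiff.mp hb with ⟨hb2, hb1⟩
        have : b ≤ M := hMmax b (Finset.mem_symmDiff.mpr (Or.inr ⟨hb2, hb1⟩))
        exact lt_of_le_of_ne this (fun h => hb1 (h ▸ hM1))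
      obtain ⟨b₂, hb₂, hfac⟩ := hQE hB₁ hB₂ M hMmem hbig
      rcases Finset.mem_sdiff.mp hb₂ with ⟨hb₂2, hb₂1⟩
      set B₁' := insert b₂ (B₁.erase M) with hB₁'def
      have hb₂ltM : b₂ < M := hbig b₂ (Finset.mem_sdiff.mpr ⟨hb₂2, hb₂1⟩)
      have hmleb₂ : m ≤ b₂ := hmin b₂ (Finset.mem_symmDiff.mpr (Or.inr ⟨hb₂2, hb₂1⟩))
      have hmM : m ≠ M := fun h => absurd (hmleb₂.trans_lt hb₂ltM) (by simp [h])
      -- B₁' \ B₂ ⊆ (B₁ \ B₂).erase M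
      have hsub' : B₁' \ B₂ ⊆ (B₁ \ B₂).erase M := by
        intro x hx
        rcases Finset.mem_sdiff.mp hx with ⟨hx1, hx2⟩
        rcases Finset.mem_insert.mp hx1 with h | h
        · exact absurd (h ▸ hb₂2) hx2
        · rcases Finset.mem_erase.mp h with ⟨hxM, hxB1⟩
          exact Finset.mem_erase.mpr ⟨hxM, Finset.mem_sdiff.mpr ⟨hxB1, hx2⟩⟩
      have hcard' : (B₁' \ B₂).card ≤ n := by
        have h1 := Finset.card_le_card hsub'
        have h2 : ((B₁ \ B₂).erase M).card = (B₁ \ B₂).card - 1 :=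
          Finset.card_erase_of_mem hMmem
        omega
      have hlt' : lexLt B₁' B₂ := by
        refine ⟨m, ?_, ?_⟩
        · rcases Finset.mem_sdiff.mp hm with ⟨hm1, hm2⟩
          exact Finset.mem_sdiff.mpr
            ⟨Finset.mem_insert_of_mem (Finset.mem_erase.mpr ⟨hmM, hm1⟩), hm2⟩
        · intro b hb
          rw [Finset.mem_symmDiff] at hb
          rcases hb with ⟨hb1, hb2⟩ | ⟨hb2, hb1⟩
          · rcases Finset.mem_insert.mp hb1 with h | h
            · exact absurd (h ▸ hb₂2) hb2
            · exact hmin b (Finset.mem_symmDiff.mpr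
                (Or.inl ⟨(Finset.mem_erase.mp h).2, hb2⟩))
          · have hbB1 : b ∉ B₁ := by
              intro hbB1
              have hbM : b ≠ M := fun h => hM2 (h ▸ hb2)
              exact hb1 (Finset.mem_insert_of_mem (Finset.mem_erase.mpr ⟨hbM, hbB1⟩))
            exact hmin b (Finset.mem_symmDiff.mpr (Or.inr ⟨hb2, hbB1⟩))
      obtain ⟨B₃, hf3, hl3, e, he, hss, heq⟩ := ih B₁' hcard' hfac hlt'
      refine ⟨B₃, hf3, hl3, e, he, ?_, heq⟩
      refine subset_trans ?_ hss
      intro x hx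
      rcases Finset.mem_inter.mp hx with ⟨hx1, hx2⟩
      have hxM : x ≠ M := fun h => hM2 (h ▸ hx2)
      exact Finset.mem_inter.mpr
        ⟨Finset.mem_insert_of_mem (Finset.mem_erase.mpr ⟨hxM, hx1⟩), hx2⟩
    · -- M ∈ B₂ \ B₁ : exchange in B₂ directly
      have hMmem : M ∈ B₂ \ B₁ := Finset.mem_sdiff.mpr ⟨hM2, hM1⟩
      have hbig : ∀ b ∈ B₁ \ B₂, b < M := by
        intro b hb
        rcases Finset.mem_sdiff.mp hb with ⟨hb1, hb2⟩
        have : b ≤ M := hMmax b (Finset.mem_symmDiff.mpr (Or.inl ⟨hb1, hb2⟩))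
        exact lt_of_le_of_ne this (fun h => hb2 (h ▸ hM2))
      obtain ⟨b₂, hb₂, hfac⟩ := hQE hB₂ hB₁ M hMmem hbig
      rcases Finset.mem_sdiff.mp hb₂ with ⟨hb₂1, hb₂2⟩
      set B₃ := insert b₂ (B₂.erase M) with hB₃def
      have hb₂ltM : b₂ < M := hbig b₂ (Finset.mem_sdiff.mpr ⟨hb₂1, hb₂2⟩)
      refine ⟨B₃, hfac, ?_, M, hM2, ?_, ?_⟩
      · -- lexLt B₃ B₂
        refine ⟨b₂, Finset.mem_sdiff.mpr ⟨Finset.mem_insert_self _ _, hb₂2⟩, ?_⟩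
        intro b hb
        rw [Finset.mem_symmDiff] at hb
        rcases hb with ⟨hb1, hb2⟩ | ⟨hb2, hb1⟩
        · rcases Finset.mem_insert.mp hb1 with h | h
          · exact le_of_eq h.symm
          · exact absurd (Finset.mem_of_mem_erase h) hb2
        · have : b = M := by
            by_contra hbM
            have hbb₂ : b ≠ b₂ := fun h => hb₂2 (h ▸ hb2)
            exact hb1 (Finset.mem_insert_of_mem (Finset.mem_erase.mpr ⟨hbM, hb2⟩))
          exact this ▸ hb₂ltM.le
      · -- B₁ ∩ B₂ ⊆ B₃ ∩ B₂
        intro x hx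
        rcases Finset.mem_inter.mp hx with ⟨hx1, hx2⟩
        have hxM : x ≠ M := fun h => hM1 (h ▸ hx1)
        exact Finset.mem_inter.mpr
          ⟨Finset.mem_insert_of_mem (Finset.mem_erase.mpr ⟨hxM, hx2⟩), hx2⟩
      · -- B₃ ∩ B₂ = B₂.erase M
        ext x
        simp only [hB₃def, Finset.mem_inter, Finset.mem_insert, Finset.mem_erase]
        constructor
        · rintro ⟨h | ⟨hxM, -⟩, hx2⟩
          · exact absurd (h ▸ hx2) hb₂2
          · exact ⟨hxM, hx2⟩
        · rintro ⟨hxM, hx2⟩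
          exact ⟨Or.inr ⟨hxM, hx2⟩, hx2⟩
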